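/- Let (W,S) be a Coxeter system with root system Φ and fundamental chamber C. If α ∈ Φ ∩ C then α is a positive root, and if moreover (W,S) is irreducible then W is finite. -/

import Mathlib

open scoped BigOperators

/-- Nonnegative conical span of a subset of a real vector space. -/
def nnCone {V : Type*} [AddCommGroup V] [Module ℝ V] (Γ : Set V) : Set V :=
  { v | ∃ (s : Finset V) (c : V → ℝ), ↑s ⊆ Γ ∧ (∀ x ∈ s, 0 ≤ c x) ∧ v = ∑ x ∈ s, c x • x }

/-- A based root system for a Coxeter system, in a real quadratic space. -/
structure BasedRootSystem (V : Type*) [AddCommGroup V] [Module ℝ V] where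
  form : V →ₗ[ℝ] V →ₗ[ℝ] ℝ
  form_symm : ∀ u v, form u v = form v u
  simples : Set V
  posIndep : ∀ s : Finset V, ↑s ⊆ simples → ∀ c : V → ℝ,
      (∀ v ∈ s, 0 < c v) → ∑ v ∈ s, c v • v = 0 → s = ∅
  norm_one : ∀ α ∈ simples, form α α = 1
  pairing : ∀ α ∈ simples, ∀ β ∈ simples, α ≠ β →
      (∃ m : ℕ, 2 ≤ m ∧ form α β = -Real.cos (Real.pi / (m : ℝ))) ∨ form α β ≤ -1

namespace BasedRootSystem

variable {V : Type*} [AddCommGroup V] [Module ℝ V]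

/-- `g` is the reflection in the vector `α` (so `g v = v - ⟨v, α^∨⟩ α` with
`α^∨ = (2/⟨α,α⟩)α`). -/
def IsRefl (R : BasedRootSystem V) (α : V) (g : V ≃ₗ[ℝ] V) : Prop :=
  ∀ v, g v = v - ((2 / R.form α α) * R.form v α) • α

/-- The Coxeter group `W`, generated by the simple reflections. -/
def W (R : BasedRootSystem V) : Subgroup (V ≃ₗ[ℝ] V) :=
  Subgroup.closure { g | ∃ α ∈ R.simples, R.IsRefl α g }

/-- The reflection subgroup generated by reflections in the elements of `Δ`. -/
def subW (R : BasedRootSystem V) (Δ : Set V) : Subgroup (V ≃ₗ[ℝ] V) :=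
  Subgroup.closure { g | ∃ α ∈ Δ, R.IsRefl α g }

/-- The root system `Φ = WΠ`. -/
def roots (R : BasedRootSystem V) : Set V :=
  { β | ∃ w ∈ R.W, ∃ α ∈ R.simples, β = w α }

/-- The positive roots `Φ⁺ = Φ ∩ ℝ_{≥0}Π`. -/
def posRoots (R : BasedRootSystem V) : Set V := R.roots ∩ nnCone R.simples

/-- The fundamental chamber `𝒞`. -/
def chamber (R : BasedRootSystem V) : Set V := { v | ∀ α ∈ R.simples, 0 ≤ R.form v α }

/-- `𝒦 = ℝ_{≥0}Π ∩ (−𝒞)`. -/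
def K (R : BasedRootSystem V) : Set V :=
  nnCone R.simples ∩ { v | ∀ α ∈ R.simples, R.form v α ≤ 0 }

/-- The imaginary cone `𝒵 = ⋃_{w ∈ W} w(𝒦)`. -/
def imaginaryCone (R : BasedRootSystem V) : Set V :=
  { v | ∃ w ∈ R.W, ∃ k ∈ R.K, v = w k }

/-- The standard length function of `(W,S)`. -/
noncomputable def length (R : BasedRootSystem V) (w : V ≃ₗ[ℝ] V) : ℕ :=
  sInf { n | ∃ l : List (V ≃ₗ[ℝ] V), l.length = n ∧
      (∀ g ∈ l, ∃ α ∈ R.simples, R.IsRefl α g) ∧ w = l.prod }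

/-- Irreducibility of the Coxeter system: the Coxeter graph on `Π` is connected. -/
def Irred (R : BasedRootSystem V) : Prop :=
  ∀ A B : Set V, A ∪ B = R.simples → (∀ a ∈ A, ∀ b ∈ B, R.form a b = 0) →
    A = ∅ ∨ B = ∅

/-- `Δ` is a support of `v`: `v` is a strictly positive combination of `Δ ⊆ Π`. -/
def IsSupport (R : BasedRootSystem V) (Δ : Finset V) (v : V) : Prop :=
  ↑Δ ⊆ R.simples ∧ ∃ c : V → ℝ, (∀ x ∈ Δ, 0 < c x) ∧ v = ∑ x ∈ Δ, c x • x

/-- `Δ` is connected in the Coxeter graph. -/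
def ConnSubset (R : BasedRootSystem V) (Δ : Finset V) : Prop :=
  ∀ x ∈ Δ, ∀ y ∈ Δ, Relation.ReflTransGen
    (fun a b => a ∈ Δ ∧ b ∈ Δ ∧ R.form a b ≠ 0) x y

end BasedRootSystem

namespace BasedRootSystem

variable {V : Type*} [AddCommGroup V] [Module ℝ V] (R : BasedRootSystem V)

/-! ### Reflections -/

/-- The reflection in a vector `α` of norm one, as a linear map. -/
noncomputable def reflAux (α : V) : V →ₗ[ℝ] V :=
  LinearMap.id - (((2:ℝ) • R.form.flip α).smulRight α)

lemma reflAux_apply (α v : V) :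
    R.reflAux α v = v - ((2:ℝ) * R.form v α) • α := by
  simp [reflAux, LinearMap.smulRight_apply, smul_smul]

lemma reflAux_invol {α : V} (h : R.form α α = 1) (v : V) :
    R.reflAux α (R.reflAux α v) = v := by
  rw [reflAux_apply, reflAux_apply]
  simp only [map_sub, map_smul, LinearMap.sub_apply, LinearMap.smul_apply, smul_eq_mul, h]
  module

/-- The reflection in a vector `α` of norm one, as a linear equivalence. -/
noncomputable def refl (α : V) (h : R.form α α = 1) : V ≃ₗ[ℝ] V :=
  { R.reflAux α with
    invFun := R.reflAux α
    left_inv := R.reflAux_invol h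
    right_inv := R.reflAux_invol h }

lemma refl_apply (α : V) (h : R.form α α = 1) (v : V) :
    R.refl α h v = v - ((2:ℝ) * R.form v α) • α := R.reflAux_apply α v

lemma isRefl_refl (α : V) (h : R.form α α = 1) : R.IsRefl α (R.refl α h) := by
  intro v
  rw [refl_apply, h]
  norm_num

lemma isRefl_eq_refl {α : V} {g : V ≃ₗ[ℝ] V} (h : R.form α α = 1)
    (hg : R.IsRefl α g) : g = R.refl α h := by
  apply LinearEquiv.toLinearMap_injective
  apply LinearMap.ext
  intro v
  rw [LinearEquiv.coe_coe, LinearEquiv.coe_coe, hg v, refl_apply, h]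
  norm_num

lemma refl_mul_self (α : V) (h : R.form α α = 1) :
    R.refl α h * R.refl α h = 1 := by
  apply LinearEquiv.toLinearMap_injective
  apply LinearMap.ext
  intro v
  exact R.reflAux_invol h v

lemma refl_inv (α : V) (h : R.form α α = 1) :
    (R.refl α h)⁻¹ = R.refl α h :=
  inv_eq_of_mul_eq_one_left (R.refl_mul_self α h)

lemma refl_apply_self (α : V) (h : R.form α α = 1) :
    R.refl α h α = -α := by
  rw [refl_apply, h]
  rw [mul_one, two_smul]
  abel

lemma refl_form (α : V) (h : R.form α α = 1) (u v : V) :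
    R.form (R.refl α h u) (R.refl α h v) = R.form u v := by
  rw [refl_apply, refl_apply]
  simp only [map_sub, map_smul, LinearMap.sub_apply, LinearMap.smul_apply, smul_eq_mul, h]
  rw [R.form_symm α v]
  ring

end BasedRootSystem
set_option linter.unusedSectionVars false
set_option linter.dupNamespace false
namespace BasedRootSystem

open scoped Classical

variable {V : Type*} [AddCommGroup V] [Module ℝ V] (R : BasedRootSystem V)

lemma mul_apply' (e₁ e₂ : V ≃ₗ[ℝ] V) (v : V) : (e₁ * e₂) v = e₁ (e₂ v) := rfl

/-! ### Cone lemmas -/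

lemma sum_ite_smul (s t : Finset V) (c : V → ℝ) (h : s ⊆ t) :
    ∑ x ∈ t, (if x ∈ s then c x else 0) • x = ∑ x ∈ s, c x • x := by
  rw [← Finset.sum_subset h (fun x _ hx => by simp [hx])]
  exact Finset.sum_congr rfl fun x hx => by simp [hx]

lemma zero_mem_nnCone (Γ : Set V) : (0:V) ∈ nnCone Γ :=
  ⟨∅, fun _ => 0, by simp, by simp, by simp⟩

lemma mem_nnCone_of_mem {Γ : Set V} {x : V} (hx : x ∈ Γ) : x ∈ nnCone Γ :=
  ⟨{x}, fun _ => 1, by simpa using hx, by norm_num, by simp⟩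

lemma ite_coeff_nonneg (s : Finset V) (c : V → ℝ) (hc : ∀ x ∈ s, 0 ≤ c x) (x : V) :
    (0:ℝ) ≤ if x ∈ s then c x else 0 := by
  by_cases hx : x ∈ s
  · simpa [hx] using hc x hx
  · simp [hx]

lemma add_mem_nnCone {Γ : Set V} {u v : V} (hu : u ∈ nnCone Γ) (hv : v ∈ nnCone Γ) :
    u + v ∈ nnCone Γ := by
  obtain ⟨s₁, c₁, hs₁, hc₁, rfl⟩ := hu
  obtain ⟨s₂, c₂, hs₂, hc₂, rfl⟩ := hv
  refine ⟨s₁ ∪ s₂, fun x => (if x ∈ s₁ then c₁ x else 0) + (if x ∈ s₂ then c₂ x else 0),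
    ?_, ?_, ?_⟩
  · intro x hx
    rcases Finset.mem_union.1 (by exact_mod_cast hx) with h | h
    exacts [hs₁ h, hs₂ h]
  · intro x _
    exact add_nonneg (ite_coeff_nonneg s₁ c₁ hc₁ x) (ite_coeff_nonneg s₂ c₂ hc₂ x)
  · rw [Finset.sum_congr rfl (fun x _ => add_smul _ _ x), Finset.sum_add_distrib,
      sum_ite_smul _ _ _ Finset.subset_union_left,
      sum_ite_smul _ _ _ Finset.subset_union_right]

lemma smul_mem_nnCone {Γ : Set V} {v : V} {t : ℝ} (ht : 0 ≤ t) (hv : v ∈ nnCone Γ) :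
    t • v ∈ nnCone Γ := by
  obtain ⟨s, c, hs, hc, rfl⟩ := hv
  exact ⟨s, fun x => t * c x, hs, fun x hx => mul_nonneg ht (hc x hx),
    by rw [Finset.smul_sum]; exact Finset.sum_congr rfl fun x _ => (smul_smul _ _ _)⟩

/-- In a nonnegative representation of `0`, all coefficients vanish. -/
lemma coeff_eq_zero_of_sum_eq_zero {s : Finset V} (hs : ↑s ⊆ R.simples) {c : V → ℝ}
    (h0 : ∀ x ∈ s, 0 ≤ c x) (hsum : ∑ x ∈ s, c x • x = 0) : ∀ x ∈ s, c x = 0 := by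
  have hfil : ∑ x ∈ s.filter (fun x => c x ≠ 0), c x • x = ∑ x ∈ s, c x • x := by
    apply Finset.sum_filter_of_ne
    intro x _ hx hcx
    exact hx (by rw [hcx, zero_smul])
  have hempty : s.filter (fun x => c x ≠ 0) = ∅ := by
    apply R.posIndep _ ?_ c
    · intro x hx
      rcases Finset.mem_filter.1 hx with ⟨hxs, hcx⟩
      exact lt_of_le_of_ne (h0 x hxs) (Ne.symm hcx)
    · rw [hfil]; exact hsum
    · intro x hx
      have : x ∈ s.filter (fun x => c x ≠ 0) := by exact_mod_cast hx
      exact hs (Finset.mem_of_mem_filter _ this)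
  intro x hx
  by_contra hcx
  have : x ∈ s.filter (fun x => c x ≠ 0) := Finset.mem_filter.2 ⟨hx, hcx⟩
  rw [hempty] at this
  exact absurd this (Finset.notMem_empty x)

lemma eq_zero_of_mem_nnCone_of_neg_mem {v : V} (hv : v ∈ nnCone R.simples)
    (hv' : -v ∈ nnCone R.simples) : v = 0 := by
  obtain ⟨s₁, c₁, hs₁, hc₁, hv1⟩ := hv
  obtain ⟨s₂, c₂, hs₂, hc₂, hv2⟩ := hv'
  set c : V → ℝ := fun x => (if x ∈ s₁ then c₁ x else 0) + (if x ∈ s₂ then c₂ x else 0) with hcdef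
  have hsum : ∑ x ∈ s₁ ∪ s₂, c x • x = 0 := by
    rw [Finset.sum_congr rfl (fun x _ => add_smul _ _ x), Finset.sum_add_distrib,
      sum_ite_smul _ _ _ Finset.subset_union_left,
      sum_ite_smul _ _ _ Finset.subset_union_right, ← hv1, ← hv2]
    abel
  have hsub : ↑(s₁ ∪ s₂) ⊆ R.simples := by
    intro x hx
    rcases Finset.mem_union.1 (by exact_mod_cast hx) with h | h
    exacts [hs₁ h, hs₂ h]
  have h0 : ∀ x ∈ s₁ ∪ s₂, 0 ≤ c x := fun x _ =>
    add_nonneg (ite_coeff_nonneg s₁ c₁ hc₁ x) (ite_coeff_nonneg s₂ c₂ hc₂ x)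
  have hz := R.coeff_eq_zero_of_sum_eq_zero hsub h0 hsum
  have hz1 : ∀ x ∈ s₁, c₁ x = 0 := by
    intro x hx
    have h := hz x (Finset.mem_union_left _ hx)
    simp only [hcdef, hx, if_true] at h
    have h1 : 0 ≤ c₁ x := hc₁ x hx
    have h2 : 0 ≤ (if x ∈ s₂ then c₂ x else 0) := ite_coeff_nonneg s₂ c₂ hc₂ x
    linarith
  rw [hv1]
  exact Finset.sum_eq_zero fun x hx => by rw [hz1 x hx, zero_smul]

/-! ### W basics -/

/-- The generating set of simple reflections. -/
def gens : Set (V ≃ₗ[ℝ] V) := { g | ∃ α ∈ R.simples, R.IsRefl α g }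

lemma refl_mem_gens {α : V} (hα : α ∈ R.simples) :
    R.refl α (R.norm_one α hα) ∈ R.gens :=
  ⟨α, hα, R.isRefl_refl α (R.norm_one α hα)⟩

lemma gens_description {g : V ≃ₗ[ℝ] V} (hg : g ∈ R.gens) :
    ∃ (α : V) (hα : α ∈ R.simples), g = R.refl α (R.norm_one α hα) := by
  obtain ⟨α, hα, hr⟩ := hg
  exact ⟨α, hα, R.isRefl_eq_refl (R.norm_one α hα) hr⟩

lemma gens_inv {g : V ≃ₗ[ℝ] V} (hg : g ∈ R.gens) : g⁻¹ = g := by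
  obtain ⟨α, hα, rfl⟩ := R.gens_description hg
  exact R.refl_inv α _

lemma gens_mem_W {g : V ≃ₗ[ℝ] V} (hg : g ∈ R.gens) : g ∈ R.W :=
  Subgroup.subset_closure hg

lemma word_mem_W {l : List (V ≃ₗ[ℝ] V)} (hl : ∀ g ∈ l, g ∈ R.gens) : l.prod ∈ R.W := by
  induction l with
  | nil => exact one_mem _
  | cons g l ih =>
      rw [List.prod_cons]
      exact mul_mem (R.gens_mem_W (hl g (by simp))) (ih fun x hx => hl x (by simp [hx]))

lemma word_inv {l : List (V ≃ₗ[ℝ] V)} (hl : ∀ g ∈ l, g ∈ R.gens) :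
    (l.prod)⁻¹ = l.reverse.prod := by
  induction l with
  | nil => simp
  | cons g l ih =>
      rw [List.prod_cons, mul_inv_rev, List.reverse_cons, List.prod_append,
        ih (fun x hx => hl x (by simp [hx])), List.prod_singleton,
        R.gens_inv (hl g (by simp))]

lemma exists_word {w : V ≃ₗ[ℝ] V} (hw : w ∈ R.W) :
    ∃ l : List (V ≃ₗ[ℝ] V), (∀ g ∈ l, g ∈ R.gens) ∧ w = l.prod := by
  induction hw using Subgroup.closure_induction with
  | mem g hg => exact ⟨[g], by simpa [gens] using hg, by simp⟩
  | one => exact ⟨[], by simp, by simp⟩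
  | mul x y _ _ hx hy =>
      obtain ⟨l₁, h₁, rfl⟩ := hx
      obtain ⟨l₂, h₂, rfl⟩ := hy
      refine ⟨l₁ ++ l₂, fun g hg => ?_, by rw [List.prod_append]⟩
      rcases List.mem_append.1 hg with h | h
      exacts [h₁ g h, h₂ g h]
  | inv x _ hx =>
      obtain ⟨l, h₁, rfl⟩ := hx
      exact ⟨l.reverse, fun g hg => h₁ g (List.mem_reverse.1 hg), R.word_inv h₁⟩

lemma word_form (l : List (V ≃ₗ[ℝ] V)) (hl : ∀ g ∈ l, g ∈ R.gens) (u v : V) :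
    R.form (l.prod u) (l.prod v) = R.form u v := by
  induction l with
  | nil => simp
  | cons g l ih =>
      obtain ⟨α, hα, hg⟩ := R.gens_description (hl g (by simp))
      rw [List.prod_cons, mul_apply', mul_apply', hg, R.refl_form]
      exact ih fun x hx => hl x (by simp [hx])

/-- Elements of `W` preserve the bilinear form. -/
lemma w_form {w : V ≃ₗ[ℝ] V} (hw : w ∈ R.W) (u v : V) :
    R.form (w u) (w v) = R.form u v := by
  obtain ⟨l, hl, rfl⟩ := R.exists_word hw
  exact R.word_form l hl u v

lemma word_sub_mem_span (l : List (V ≃ₗ[ℝ] V)) (hl : ∀ g ∈ l, g ∈ R.gens) (v : V) :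
    l.prod v - v ∈ Submodule.span ℝ R.simples := by
  induction l generalizing v with
  | nil => simp
  | cons g l ih =>
      obtain ⟨α, hα, hgr⟩ := R.gens_description (hl g (by simp))
      have h1 : (g::l).prod v - l.prod v ∈ Submodule.span ℝ R.simples := by
        rw [List.prod_cons, mul_apply', hgr, R.refl_apply]
        have heq : l.prod v - (2 * R.form (l.prod v) α) • α - l.prod v
            = -((2 * R.form (l.prod v) α) • α) := by abel
        rw [heq]
        exact neg_mem (Submodule.smul_mem _ _ (Submodule.subset_span hα))
      have h2 := ih (fun x hx => hl x (by simp [hx])) v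
      have h3 := add_mem h1 h2
      simpa using h3

lemma w_sub_mem_span {w : V ≃ₗ[ℝ] V} (hw : w ∈ R.W) (v : V) :
    w v - v ∈ Submodule.span ℝ R.simples := by
  obtain ⟨l, hl, rfl⟩ := R.exists_word hw
  exact R.word_sub_mem_span l hl v

end BasedRootSystem
namespace BasedRootSystem

open scoped Classical

variable {V : Type*} [AddCommGroup V] [Module ℝ V] (R : BasedRootSystem V)

/-! ### Generic word extraction for subgroups generated by involutions -/

lemma word_inv_gen {l : List (V ≃ₗ[ℝ] V)} {S : Set (V ≃ₗ[ℝ] V)}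
    (hS : ∀ g ∈ S, g⁻¹ = g) (hl : ∀ g ∈ l, g ∈ S) :
    (l.prod)⁻¹ = l.reverse.prod := by
  induction l with
  | nil => simp
  | cons g l ih =>
      rw [List.prod_cons, mul_inv_rev, List.reverse_cons, List.prod_append,
        ih (fun x hx => hl x (by simp [hx])), List.prod_singleton,
        hS g (hl g (by simp))]

lemma exists_word_gen {S : Set (V ≃ₗ[ℝ] V)} (hS : ∀ g ∈ S, g⁻¹ = g)
    {w : V ≃ₗ[ℝ] V} (hw : w ∈ Subgroup.closure S) :
    ∃ l : List (V ≃ₗ[ℝ] V), (∀ g ∈ l, g ∈ S) ∧ w = l.prod := by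
  induction hw using Subgroup.closure_induction with
  | mem g hg => exact ⟨[g], by simpa using hg, by simp⟩
  | one => exact ⟨[], by simp, by simp⟩
  | mul x y _ _ hx hy =>
      obtain ⟨l₁, h₁, rfl⟩ := hx
      obtain ⟨l₂, h₂, rfl⟩ := hy
      refine ⟨l₁ ++ l₂, fun g hg => ?_, by rw [List.prod_append]⟩
      rcases List.mem_append.1 hg with h | h
      exacts [h₁ g h, h₂ g h]
  | inv x _ hx =>
      obtain ⟨l, h₁, rfl⟩ := hx
      exact ⟨l.reverse, fun g hg => h₁ g (List.mem_reverse.1 hg), word_inv_gen hS h₁⟩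

/-! ### Length lemmas -/

lemma length_le {l : List (V ≃ₗ[ℝ] V)} (hl : ∀ g ∈ l, g ∈ R.gens) :
    R.length l.prod ≤ l.length :=
  Nat.sInf_le ⟨l, rfl, hl, rfl⟩

lemma exists_min_word {w : V ≃ₗ[ℝ] V} (hw : w ∈ R.W) :
    ∃ l : List (V ≃ₗ[ℝ] V), (∀ g ∈ l, g ∈ R.gens) ∧ w = l.prod ∧
      l.length = R.length w := by
  obtain ⟨l₀, hl₀, rfl⟩ := R.exists_word hw
  have hne : {n | ∃ l : List (V ≃ₗ[ℝ] V), l.length = n ∧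
      (∀ g ∈ l, ∃ α ∈ R.simples, R.IsRefl α g) ∧ l₀.prod = l.prod}.Nonempty :=
    ⟨l₀.length, l₀, rfl, hl₀, rfl⟩
  obtain ⟨l, hlen, hgens, hprod⟩ := Nat.sInf_mem hne
  exact ⟨l, hgens, hprod, hlen⟩

lemma length_one : R.length (1 : V ≃ₗ[ℝ] V) = 0 := by
  have h := R.length_le (l := []) (by simp)
  simpa using h

lemma eq_one_of_length_eq_zero {w : V ≃ₗ[ℝ] V} (hw : w ∈ R.W)
    (h : R.length w = 0) : w = 1 := by
  obtain ⟨l, _, rfl, hlen⟩ := R.exists_min_word hw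
  rw [h, List.length_eq_zero_iff] at hlen
  rw [hlen, List.prod_nil]

lemma length_mul_gen_le {w g : V ≃ₗ[ℝ] V} (hw : w ∈ R.W) (hg : g ∈ R.gens) :
    R.length (w * g) ≤ R.length w + 1 := by
  obtain ⟨l, hl, rfl, hlen⟩ := R.exists_min_word hw
  have : l.prod * g = (l ++ [g]).prod := by rw [List.prod_append, List.prod_singleton]
  rw [this, ← hlen]
  have := R.length_le (l := l ++ [g]) (fun x hx => by
    rcases List.mem_append.1 hx with h | h
    exacts [hl x h, by simpa using (List.mem_singleton.1 h ▸ hg)])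
  simpa using this

end BasedRootSystem
namespace BasedRootSystem

/-! ### Chebyshev-like sequences for the dihedral computation -/

/-- `qq c n` is morally `sin (n θ) / sin θ` when `c = cos θ`. -/
noncomputable def qq (c : ℝ) : ℕ → ℝ
  | 0 => 0
  | 1 => 1
  | (n+2) => 2*c*qq c (n+1) - qq c n

/-- Two-sided extension of `qq`. -/
noncomputable def pp (c : ℝ) (k : ℤ) : ℝ :=
  if 0 ≤ k then qq c k.toNat else -qq c (-k).toNat

lemma pp_natCast (c : ℝ) (n : ℕ) : pp c (n : ℤ) = qq c n := by
  simp [pp]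

lemma pp_neg (c : ℝ) (k : ℤ) : pp c (-k) = -pp c k := by
  rcases lt_trichotomy k 0 with h | rfl | h
  · have h1 : ¬ (0 ≤ k) := not_le.2 h
    have h2 : 0 ≤ -k := by omega
    simp [pp, h1, h2, not_lt.2 h.le]
  · simp [pp, qq]
  · have h1 : (0 ≤ k) := le_of_lt h
    have h2 : ¬ (0 ≤ -k) := by omega
    simp [pp, h1, h2, not_le.2 h]

lemma pp_zero (c : ℝ) : pp c 0 = 0 := by simp [pp, qq]

lemma pp_one (c : ℝ) : pp c 1 = 1 := by
  have := pp_natCast c 1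
  simpa [qq] using this

lemma pp_neg_one (c : ℝ) : pp c (-1) = -1 := by
  rw [pp_neg, pp_one]

lemma pp_rec (c : ℝ) (k : ℤ) : pp c (k+1) + pp c (k-1) = 2*c*pp c k := by
  have hnat : ∀ n : ℕ, pp c ((n:ℤ)+1) + pp c ((n:ℤ)-1) = 2*c*pp c (n:ℤ) := by
    intro n
    cases n with
    | zero => simp [pp_zero, pp_one, pp_neg_one]
    | succ m =>
        have h1 : ((m+1:ℕ):ℤ) + 1 = ((m+2:ℕ):ℤ) := by push_cast; ring
        have h2 : ((m+1:ℕ):ℤ) - 1 = ((m:ℕ):ℤ) := by push_cast; ring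
        rw [h1, h2, pp_natCast, pp_natCast, pp_natCast]
        show qq c (m+2) + qq c m = 2*c*qq c (m+1)
        rw [show qq c (m+2) = 2*c*qq c (m+1) - qq c m from rfl]
        ring
  have hpos : ∀ j : ℤ, 0 ≤ j → pp c (j+1) + pp c (j-1) = 2*c*pp c j := by
    intro j hj
    obtain ⟨n, rfl⟩ := Int.eq_ofNat_of_zero_le hj
    exact hnat n
  rcases le_or_gt 0 k with h | h
  · exact hpos k h
  · set n := -k with hn
    have hn0 : 0 ≤ n := by omega
    have e1 : k + 1 = -(n - 1) := by omega
    have e2 : k - 1 = -(n + 1) := by omega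
    have e3 : k = -n := by omega
    rw [e1, e2, e3, pp_neg, pp_neg, pp_neg]
    have h2 := hpos n hn0
    linear_combination -h2

/-- The recursion in subtraction form. -/
lemma pp_rec' (c : ℝ) (k : ℤ) : pp c (k+1) = 2*c*pp c k - pp c (k-1) := by
  have := pp_rec c k
  linarith

lemma pp_rec'' (c : ℝ) (k : ℤ) : pp c (k-1) = 2*c*pp c k - pp c (k+1) := by
  have := pp_rec c k
  linarith

/-! ### Sign control: the case `1 ≤ c` -/

lemma qq_mono_nonneg {c : ℝ} (hc : 1 ≤ c) :
    ∀ n : ℕ, 0 ≤ qq c n ∧ qq c n ≤ qq c (n+1) := by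
  intro n
  induction n using Nat.twoStepInduction with
  | zero => norm_num [qq]
  | one =>
      refine ⟨by norm_num [qq], ?_⟩
      show (1:ℝ) ≤ 2*c*qq c 1 - qq c 0
      simp only [qq]
      nlinarith
  | more n ih1 ih2 =>
      obtain ⟨h1, h2⟩ := ih1
      obtain ⟨h3, h4⟩ := ih2
      have h5 : 0 ≤ qq c (n+2) := by linarith
      refine ⟨h5, ?_⟩
      show qq c (n+2) ≤ 2*c*qq c (n+2) - qq c (n+1)
      nlinarith

lemma pp_sign_of_one_le {c : ℝ} (hc : 1 ≤ c) (k : ℤ) :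
    (0 ≤ pp c k ∧ 0 ≤ pp c (k-1)) ∨ (pp c k ≤ 0 ∧ pp c (k-1) ≤ 0) := by
  rcases le_or_gt 1 k with h | h
  · left
    obtain ⟨n, rfl⟩ := Int.eq_ofNat_of_zero_le (by omega : (0:ℤ) ≤ k)
    have e2 : (n:ℤ) - 1 = ((n-1 : ℕ) : ℤ) := by omega
    rw [pp_natCast, e2, pp_natCast]
    exact ⟨(qq_mono_nonneg hc n).1, (qq_mono_nonneg hc (n-1)).1⟩
  · right
    have hk : pp c k = - pp c (-k) := by
      have := pp_neg c (-k); simpa using this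
    have hk1 : pp c (k-1) = - pp c (-(k-1)) := by
      have := pp_neg c (-(k-1)); simpa using this
    rw [hk, hk1]
    obtain ⟨n, hn⟩ := Int.eq_ofNat_of_zero_le (by omega : (0:ℤ) ≤ -k)
    obtain ⟨m, hm⟩ := Int.eq_ofNat_of_zero_le (by omega : (0:ℤ) ≤ -(k-1))
    rw [hn, hm, pp_natCast, pp_natCast]
    constructor <;> simp [(qq_mono_nonneg hc _).1]

end BasedRootSystem
namespace BasedRootSystem

open Real

/-! ### Sign control: the case `c = cos (π / m)` -/

lemma qq_sin {m : ℕ} (hm : 2 ≤ m) :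
    ∀ n : ℕ, qq (Real.cos (π / m)) n * Real.sin (π / m) = Real.sin (n * (π / m)) := by
  set θ := π / m with hθ
  set c := Real.cos θ with hcθ
  intro n
  induction n using Nat.twoStepInduction with
  | zero => simp [qq]
  | one => simp [qq]
  | more n ih1 ih2 =>
      have h1 : ((n+2:ℕ):ℝ) * θ = ((n+1:ℕ):ℝ) * θ + θ := by push_cast; ring
      have h2 : ((n:ℕ):ℝ) * θ = ((n+1:ℕ):ℝ) * θ - θ := by push_cast; ring
      have key : Real.sin (((n+2:ℕ):ℝ) * θ) + Real.sin (((n:ℕ):ℝ) * θ)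
          = 2 * c * Real.sin (((n+1:ℕ):ℝ) * θ) := by
        rw [h1, h2, Real.sin_add, Real.sin_sub]
        ring
      show (2*c*qq c (n+1) - qq c n) * Real.sin θ = Real.sin (((n+2:ℕ):ℝ) * θ)
      linear_combination 2*c*ih2 - ih1 - key

lemma pp_sin {m : ℕ} (hm : 2 ≤ m) (k : ℤ) :
    pp (Real.cos (π / m)) k * Real.sin (π / m) = Real.sin (k * (π / m)) := by
  rcases le_or_gt 0 k with h | h
  · obtain ⟨n, rfl⟩ := Int.eq_ofNat_of_zero_le h
    rw [pp_natCast]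
    exact_mod_cast qq_sin hm n
  · obtain ⟨n, hn⟩ := Int.eq_ofNat_of_zero_le (by omega : (0:ℤ) ≤ -k)
    have hk : k = -(n:ℤ) := by omega
    subst hk
    rw [pp_neg, pp_natCast, neg_mul, qq_sin hm n]
    have : ((-(n:ℤ) : ℤ) : ℝ) * (π/m) = -((n:ℝ) * (π/m)) := by push_cast; ring
    rw [this, Real.sin_neg]

/-- On `[jπ, (j+1)π]`, `sin` has the sign `(-1)^j`. -/
lemma sin_sign_interval (j : ℤ) (x : ℝ) (h1 : (j:ℝ) * π ≤ x) (h2 : x ≤ ((j:ℝ)+1) * π) :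
    (Even j → 0 ≤ Real.sin x) ∧ (¬ Even j → Real.sin x ≤ 0) := by
  rcases Int.even_or_odd j with ⟨l, hl⟩ | ⟨l, hl⟩
  · have hj : (j:ℝ) = (l:ℝ) + (l:ℝ) := by rw [hl]; push_cast; ring
    rw [hj] at h1 h2
    have hper : Real.sin x = Real.sin (x - l * (2*π)) := by
      have := Real.sin_add_int_mul_two_pi (x - l*(2*π)) l
      simpa using this.symm
    constructor
    · intro _
      rw [hper]
      apply Real.sin_nonneg_of_nonneg_of_le_pi
      · linarith
      · linarith
    · intro h
      exact absurd ⟨l, hl⟩ h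
  · have hj : (j:ℝ) = 2*(l:ℝ) + 1 := by rw [hl]; push_cast; ring
    rw [hj] at h1 h2
    have hper : Real.sin x = Real.sin (x - l * (2*π)) := by
      have := Real.sin_add_int_mul_two_pi (x - l*(2*π)) l
      simpa using this.symm
    constructor
    · intro h
      exfalso
      rw [Int.even_iff] at h
      omega
    · intro _
      set y := x - l*(2*π) with hy
      have hy1 : π ≤ y := by simp only [hy]; linarith
      have hy2 : y ≤ 2*π := by simp only [hy]; linarith
      have hsub : Real.sin (y - π) = - Real.sin y := Real.sin_sub_pi y
      have hnn : 0 ≤ Real.sin (y - π) :=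
        Real.sin_nonneg_of_nonneg_of_le_pi (by linarith) (by linarith)
      rw [hper]
      linarith [hsub ▸ hnn]

end BasedRootSystem
namespace BasedRootSystem

open Real

lemma pp_sign_of_cos {m : ℕ} (hm : 2 ≤ m) (k : ℤ) :
    (0 ≤ pp (Real.cos (π/m)) k ∧ 0 ≤ pp (Real.cos (π/m)) (k-1)) ∨
    (pp (Real.cos (π/m)) k ≤ 0 ∧ pp (Real.cos (π/m)) (k-1) ≤ 0) := by
  set θ := π / (m:ℝ) with hθdef
  have hmR : (0:ℝ) < m := by positivity
  have hθpos : 0 < θ := by positivity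
  have h2m : (2:ℝ) ≤ (m:ℝ) := by exact_mod_cast hm
  have hθlt : θ < π := by
    rw [hθdef, div_lt_iff₀ hmR]
    nlinarith [Real.pi_pos, h2m]
  have hsin : 0 < Real.sin θ := Real.sin_pos_of_pos_of_lt_pi hθpos hθlt
  set j : ℤ := (k-1) / (m:ℤ) with hjdef
  have hmZ : (0:ℤ) < m := by exact_mod_cast hm.trans_lt' (by norm_num)
  have hdm := Int.mul_ediv_add_emod (k-1) (m:ℤ)
  have hr0 : 0 ≤ (k-1) % (m:ℤ) := Int.emod_nonneg _ (by omega)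
  have hrm : (k-1) % (m:ℤ) < m := Int.emod_lt_of_pos _ hmZ
  have hb1 : j * m ≤ k - 1 := by nlinarith [hdm, hr0]
  have hb2 : k ≤ (j+1) * m := by nlinarith [hdm, hrm]
  -- real bounds
  have hmθ : (m:ℝ) * θ = π := by
    rw [hθdef]; field_simp
  have hx1 : (j:ℝ) * π ≤ ((k:ℝ)-1) * θ := by
    have h : ((j:ℝ)*(m:ℝ)) ≤ ((k:ℝ)-1) := by
      have : ((j*m : ℤ):ℝ) ≤ ((k-1 : ℤ):ℝ) := by exact_mod_cast hb1
      push_cast at this; linarith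
    have h2 := mul_le_mul_of_nonneg_right h hθpos.le
    calc (j:ℝ)*π = ((j:ℝ)*(m:ℝ))*θ := by rw [← hmθ]; ring
      _ ≤ ((k:ℝ)-1)*θ := h2
  have hx2 : (k:ℝ) * θ ≤ ((j:ℝ)+1) * π := by
    have h : (k:ℝ) ≤ ((j:ℝ)+1)*(m:ℝ) := by
      have : ((k : ℤ):ℝ) ≤ (((j+1)*m : ℤ):ℝ) := by exact_mod_cast hb2
      push_cast at this; linarith
    have h2 := mul_le_mul_of_nonneg_right h hθpos.le
    calc (k:ℝ)*θ ≤ (((j:ℝ)+1)*(m:ℝ))*θ := h2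
      _ = ((j:ℝ)+1)*π := by rw [← hmθ]; ring
  have hx3 : ((k:ℝ)-1) * θ ≤ (k:ℝ) * θ := by nlinarith [hθpos]
  have hs1 := sin_sign_interval j (((k:ℝ)-1) * θ) hx1 (le_trans hx3 hx2)
  have hs2 := sin_sign_interval j ((k:ℝ) * θ) (le_trans hx1 hx3) hx2
  have hpk := pp_sin hm k
  have hpk1 := pp_sin hm (k-1)
  rw [← hθdef] at hpk hpk1
  have hck : ((k:ℤ):ℝ) * θ = (k:ℝ) * θ := by norm_num
  have hck1 : ((k-1:ℤ):ℝ) * θ = ((k:ℝ)-1) * θ := by push_cast; ring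
  rw [hck] at hpk
  rw [hck1] at hpk1
  by_cases hev : Even j
  · left
    constructor
    · nlinarith [hs2.1 hev, hsin, hpk]
    · nlinarith [hs1.1 hev, hsin, hpk1]
  · right
    constructor
    · nlinarith [hs2.2 hev, hsin, hpk]
    · nlinarith [hs1.2 hev, hsin, hpk1]

/-- Combined sign lemma for the two kinds of simple pairings. -/
lemma pp_sign {c : ℝ} (hc : (∃ m : ℕ, 2 ≤ m ∧ c = Real.cos (π/m)) ∨ 1 ≤ c) (k : ℤ) :
    (0 ≤ pp c k ∧ 0 ≤ pp c (k-1)) ∨ (pp c k ≤ 0 ∧ pp c (k-1) ≤ 0) := by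
  rcases hc with ⟨m, hm, rfl⟩ | hc
  · exact pp_sign_of_cos hm k
  · exact pp_sign_of_one_le hc k

end BasedRootSystem
namespace BasedRootSystem

open Real
open scoped Classical

set_option linter.unusedSectionVars false

variable {V : Type*} [AddCommGroup V] [Module ℝ V] (R : BasedRootSystem V)

section Dihedral

variable {β τ : V} (hβ : β ∈ R.simples) (hτ : τ ∈ R.simples)

/-- The main dihedral lemma: every element of the dihedral group generated by the
reflections in two simple roots `β ≠ τ` maps `β` to a combination `a β + b τ`
with `a, b` of the same (weak) sign. -/
lemma dihedral_sign (hne : β ≠ τ) :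
    ∀ x ∈ Subgroup.closure {R.refl β (R.norm_one β hβ), R.refl τ (R.norm_one τ hτ)},
      ∃ a b : ℝ, x β = a • β + b • τ ∧ ((0 ≤ a ∧ 0 ≤ b) ∨ (a ≤ 0 ∧ b ≤ 0)) := by
  set h1 := R.norm_one β hβ
  set h2 := R.norm_one τ hτ
  set c : ℝ := - R.form β τ with hcdef
  have hβτ : R.form β τ = -c := by rw [hcdef]; ring
  have hτβ : R.form τ β = -c := by rw [← R.form_symm]; exact hβτ
  -- coefficient computations
  have reflβ_coeff : ∀ k : ℤ, R.refl β h1 (pp c k • β + pp c (k-1) • τ)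
      = pp c (k-2) • β + pp c (k-1) • τ := by
    intro k
    rw [R.refl_apply]
    have hform : R.form (pp c k • β + pp c (k-1) • τ) β = pp c k - c * pp c (k-1) := by
      simp only [map_add, map_smul, LinearMap.add_apply, LinearMap.smul_apply,
        smul_eq_mul, h1, hτβ]
      ring
    rw [hform]
    have hk : pp c (k-2) = 2*c*pp c (k-1) - pp c k := by
      have h := pp_rec c (k-1)
      rw [show k-1+1 = k by ring, show k-1-1 = k-2 by ring] at h
      linarith
    rw [hk]
    module
  have reflτ_coeff : ∀ k : ℤ, R.refl τ h2 (pp c k • β + pp c (k-1) • τ)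
      = pp c k • β + pp c (k+1) • τ := by
    intro k
    rw [R.refl_apply]
    have hform : R.form (pp c k • β + pp c (k-1) • τ) τ = pp c (k-1) - c * pp c k := by
      simp only [map_add, map_smul, LinearMap.add_apply, LinearMap.smul_apply,
        smul_eq_mul, h2, hβτ]
      ring
    rw [hform]
    have hk : pp c (k+1) = 2*c*pp c k - pp c (k-1) := pp_rec' c k
    rw [hk]
    module
  -- the invariant set
  set Good : V → Prop := fun v => ∃ (ε : ℝ) (k : ℤ), (ε = 1 ∨ ε = -1) ∧
    v = ε • (pp c k • β + pp c (k-1) • τ) with hGood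
  have stepβ : ∀ v, Good v → Good (R.refl β h1 v) := by
    rintro v ⟨ε, k, hε, rfl⟩
    refine ⟨-ε, 2-k, by rcases hε with h | h <;> simp [h], ?_⟩
    rw [map_smul, reflβ_coeff k]
    have e1 : pp c (k-2) = - pp c (2-k) := by
      rw [show k-2 = -(2-k) by ring, pp_neg]
    have e2 : pp c (k-1) = - pp c (2-k-1) := by
      rw [show (2-k-1 : ℤ) = -(k-1) by ring, pp_neg]; ring
    rw [e1, e2]
    module
  have stepτ : ∀ v, Good v → Good (R.refl τ h2 v) := by
    rintro v ⟨ε, k, hε, rfl⟩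
    refine ⟨-ε, -k, by rcases hε with h | h <;> simp [h], ?_⟩
    rw [map_smul, reflτ_coeff k]
    have e1 : pp c k = - pp c (-k) := by rw [pp_neg]; ring
    have e2 : pp c (k+1) = - pp c (-k-1) := by
      rw [show (-k-1 : ℤ) = -(k+1) by ring, pp_neg]; ring
    rw [e1, e2]
    module
  -- words
  have main : ∀ l : List (V ≃ₗ[ℝ] V),
      (∀ g ∈ l, g ∈ ({R.refl β h1, R.refl τ h2} : Set (V ≃ₗ[ℝ] V))) → Good (l.prod β) := by
    intro l hl
    induction l with
    | nil =>
        refine ⟨1, 1, Or.inl rfl, ?_⟩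
        simp [pp_one, pp_zero]
    | cons g l ih =>
        have hg := hl g (by simp)
        have hGl : Good (l.prod β) := ih (fun x hx => hl x (by simp [hx]))
        rw [List.prod_cons, mul_apply']
        rcases hg with rfl | hg
        · exact stepβ _ hGl
        · rw [Set.mem_singleton_iff] at hg
          rw [hg]
          exact stepτ _ hGl
  intro x hx
  obtain ⟨l, hl, rfl⟩ := exists_word_gen (fun g hg => by
      rcases hg with rfl | hg
      · exact R.refl_inv β h1
      · rw [Set.mem_singleton_iff] at hg; rw [hg]; exact R.refl_inv τ h2) hx
  obtain ⟨ε, k, hε, hval⟩ := main l hl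
  -- sign analysis
  have hc : (∃ m : ℕ, 2 ≤ m ∧ c = Real.cos (π/m)) ∨ 1 ≤ c := by
    rcases R.pairing β hβ τ hτ hne with ⟨m, hm, hf⟩ | hf
    · left; exact ⟨m, hm, by rw [hcdef, hf]; ring⟩
    · right; rw [hcdef]; linarith
  have hsign := pp_sign hc k
  refine ⟨ε * pp c k, ε * pp c (k-1), ?_, ?_⟩
  · rw [hval, smul_add, smul_smul, smul_smul]
  · rcases hε with rfl | rfl <;> rcases hsign with ⟨ha, hb⟩ | ⟨ha, hb⟩
    · left; constructor <;> simp only [one_mul] <;> linarith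
    · right; constructor <;> simp only [one_mul] <;> linarith
    · right; constructor <;> simp only [neg_one_mul] <;> linarith
    · left; constructor <;> simp only [neg_one_mul] <;> linarith

end Dihedral

end BasedRootSystem
namespace BasedRootSystem

open Real
open scoped Classical

set_option linter.unusedSectionVars false

variable {V : Type*} [AddCommGroup V] [Module ℝ V] (R : BasedRootSystem V)

lemma simple_pairing_nonpos {x y : V} (hx : x ∈ R.simples) (hy : y ∈ R.simples)
    (hxy : x ≠ y) : R.form x y ≤ 0 := by
  rcases R.pairing x hx y hy hxy with ⟨m, hm, hf⟩ | hf
  · rw [hf, neg_nonpos]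
    apply Real.cos_nonneg_of_mem_Icc
    constructor
    · have h1 : (0:ℝ) < m := by positivity
      have : (0:ℝ) ≤ π / m := by positivity
      linarith [Real.pi_pos, this]
    · have h2 : (2:ℝ) ≤ m := by exact_mod_cast hm
      rw [div_le_div_iff₀ (by positivity) (by norm_num : (0:ℝ) < 2)]
      nlinarith [Real.pi_pos]
  · linarith

/-- If a vector of the nonnegative cone is sent into the negative cone by a simple
reflection, it is a nonnegative multiple of the corresponding simple root. -/
lemma flip_lemma {γ : V} (hγ : γ ∈ R.simples) {φ : V}
    (hφ : φ ∈ nnCone R.simples)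
    (hneg : -(R.refl γ (R.norm_one γ hγ) φ) ∈ nnCone R.simples) :
    ∃ t : ℝ, 0 ≤ t ∧ φ = t • γ := by
  set hγ1 := R.norm_one γ hγ
  obtain ⟨s, cc, hs, hcc, hφeq⟩ := hφ
  obtain ⟨s', e, hs', he, hmeq⟩ := hneg
  set d : ℝ := 2 * R.form φ γ with hd
  have hrefl : R.refl γ hγ1 φ = φ - d • γ := by rw [R.refl_apply]
  set u : Finset V := insert γ (s ∪ s') with hu
  set f : V → ℝ := fun x => (if x ∈ s then cc x else 0) + (if x ∈ s' then e x else 0)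
    - (if x = γ then d else 0) with hf
  have husub : ↑u ⊆ R.simples := by
    intro x hx
    rcases Finset.mem_insert.1 (by exact_mod_cast hx) with rfl | hx'
    · exact hγ
    · rcases Finset.mem_union.1 hx' with h | h
      exacts [hs h, hs' h]
  have hsum : ∑ x ∈ u, f x • x = 0 := by
    have e1 : ∑ x ∈ u, ((if x ∈ s then cc x else 0) : ℝ) • x = ∑ x ∈ s, cc x • x := by
      apply sum_ite_smul
      intro x hx
      exact Finset.mem_insert_of_mem (Finset.mem_union_left _ hx)
    have e2 : ∑ x ∈ u, ((if x ∈ s' then e x else 0) : ℝ) • x = ∑ x ∈ s', e x • x := by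
      apply sum_ite_smul
      intro x hx
      exact Finset.mem_insert_of_mem (Finset.mem_union_right _ hx)
    have e3 : ∑ x ∈ u, ((if x = γ then d else 0) : ℝ) • x = d • γ := by
      rw [Finset.sum_eq_single_of_mem γ (Finset.mem_insert_self _ _)]
      · simp
      · intro x _ hxγ
        simp [hxγ]
    have expand : ∀ x ∈ u, f x • x = ((if x ∈ s then cc x else 0) : ℝ) • x
        + ((if x ∈ s' then e x else 0) : ℝ) • x - ((if x = γ then d else 0) : ℝ) • x := by
      intro x _
      simp only [hf]
      rw [sub_smul, add_smul]
    rw [Finset.sum_congr rfl expand, Finset.sum_sub_distrib, Finset.sum_add_distrib,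
      e1, e2, e3, ← hφeq, ← hmeq, hrefl]
    abel
  rcases le_or_gt 0 (f γ) with hfγ | hfγ
  · -- all coefficients vanish
    have hnn : ∀ x ∈ u, 0 ≤ f x := by
      intro x hxu
      by_cases hxγ : x = γ
      · rw [hxγ]; exact hfγ
      · simp only [hf, hxγ, if_false, sub_zero]
        exact add_nonneg (ite_coeff_nonneg s cc hcc x) (ite_coeff_nonneg s' e he x)
    have hz := R.coeff_eq_zero_of_sum_eq_zero husub hnn hsum
    have hccz : ∀ x ∈ s, x ≠ γ → cc x = 0 := by
      intro x hxs hxγ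
      have h := hz x (Finset.mem_insert_of_mem (Finset.mem_union_left _ hxs))
      simp only [hf, hxs, if_true, hxγ, if_false, sub_zero] at h
      have h2 := ite_coeff_nonneg s' e he x
      have h3 := hcc x hxs
      linarith
    by_cases hγs : γ ∈ s
    · refine ⟨cc γ, hcc γ hγs, ?_⟩
      rw [hφeq, Finset.sum_eq_single_of_mem γ hγs]
      intro x hxs hxγ
      rw [hccz x hxs hxγ, zero_smul]
    · refine ⟨0, le_refl _, ?_⟩
      rw [hφeq, zero_smul]
      apply Finset.sum_eq_zero
      intro x hxs
      rw [hccz x hxs (fun h => hγs (h ▸ hxs)), zero_smul]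
  · -- contradiction by pairing with γ
    exfalso
    have happ : (0:ℝ) = ∑ x ∈ u, f x * R.form x γ := by
      have := congrArg (fun v => R.form v γ) hsum
      simpa [map_sum, map_smul, smul_eq_mul] using this.symm
    have hsplit : ∑ x ∈ u, f x * R.form x γ
        = f γ * R.form γ γ + ∑ x ∈ u.erase γ, f x * R.form x γ :=
      (Finset.add_sum_erase u (fun x => f x * R.form x γ) (Finset.mem_insert_self _ _)).symm
    have hrest : ∑ x ∈ u.erase γ, f x * R.form x γ ≤ 0 := by
      apply Finset.sum_nonpos
      intro x hx
      have hxγ : x ≠ γ := Finset.ne_of_mem_erase hx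
      have hxu : x ∈ u := Finset.mem_of_mem_erase hx
      have hfx : 0 ≤ f x := by
        simp only [hf, hxγ, if_false, sub_zero]
        exact add_nonneg (ite_coeff_nonneg s cc hcc x) (ite_coeff_nonneg s' e he x)
      have hform : R.form x γ ≤ 0 := R.simple_pairing_nonpos (husub hxu) hγ hxγ
      exact mul_nonpos_of_nonneg_of_nonpos hfx hform
    rw [hsplit, R.norm_one γ hγ, mul_one] at happ
    linarith

lemma inv_apply_eq (w : V ≃ₗ[ℝ] V) (v : V) : w (w⁻¹ v) = v :=
  w.apply_symm_apply v

/-- Conjugation of a reflection. -/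
lemma conj_refl {w : V ≃ₗ[ℝ] V} (hw : w ∈ R.W) {φ ψ : V} (hφ : R.form φ φ = 1)
    (hψ : R.form ψ ψ = 1) (h : w φ = ψ) :
    w * R.refl φ hφ * w⁻¹ = R.refl ψ hψ := by
  apply LinearEquiv.toLinearMap_injective
  apply LinearMap.ext
  intro v
  show w (R.refl φ hφ (w⁻¹ v)) = R.refl ψ hψ v
  rw [R.refl_apply, R.refl_apply, map_sub, map_smul, inv_apply_eq, h]
  have hform : R.form (w⁻¹ v) φ = R.form v ψ := by
    rw [← R.w_form hw (w⁻¹ v) φ, inv_apply_eq, h]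
  rw [hform]

lemma root_norm_one {w : V ≃ₗ[ℝ] V} (hw : w ∈ R.W) {β : V} (hβ : β ∈ R.simples) :
    R.form (w β) (w β) = 1 := by
  rw [R.w_form hw, R.norm_one β hβ]

lemma root_ne_zero {w : V ≃ₗ[ℝ] V} (hw : w ∈ R.W) {β : V} (hβ : β ∈ R.simples) :
    w β ≠ 0 := by
  intro h
  have h1 := R.root_norm_one hw hβ
  rw [h] at h1
  simp at h1

end BasedRootSystem
namespace BasedRootSystem

open scoped Classical

set_option linter.unusedSectionVars false
set_option maxHeartbeats 1000000

variable {V : Type*} [AddCommGroup V] [Module ℝ V] (R : BasedRootSystem V)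

/-- The descent (exchange-style) lemma: if `w β` is a negative root then
multiplying by the reflection in `β` decreases the length, granted the
dichotomy for shorter elements. -/
lemma descent {w : V ≃ₗ[ℝ] V} (hw : w ∈ R.W) {β : V} (hβ : β ∈ R.simples)
    (hneg : -(w β) ∈ nnCone R.simples)
    (dich : ∀ v ∈ R.W, R.length v < R.length w → ∀ γ, γ ∈ R.simples →
      (v γ ∈ nnCone R.simples ∨ -(v γ) ∈ nnCone R.simples)) :
    R.length (w * R.refl β (R.norm_one β hβ)) + 1 ≤ R.length w := by
  obtain ⟨l, hl, hwl, hlen⟩ := R.exists_min_word hw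
  set N := R.length w with hN
  set vf : ℕ → (V ≃ₗ[ℝ] V) := fun i => (l.drop i).prod with hvf
  have hvW : ∀ i, vf i ∈ R.W := fun i =>
    R.word_mem_W (fun g hg => hl g (List.drop_subset _ _ hg))
  have hvlen : ∀ i, R.length (vf i) ≤ N - i := by
    intro i
    have h1 := R.length_le (l := l.drop i) (fun g hg => hl g (List.drop_subset _ _ hg))
    rwa [List.length_drop, hlen] at h1
  have hv0 : vf 0 = w := by simp [hvf, ← hwl]
  have hvN : vf N β ∈ nnCone R.simples := by
    have : l.drop N = [] := by
      rw [← hlen]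
      exact List.drop_length
    simp [hvf, this]
    exact mem_nnCone_of_mem hβ
  have hex : ∃ i, i ≤ N ∧ vf i β ∈ nnCone R.simples := ⟨N, le_rfl, hvN⟩
  set i₀ := Nat.find hex with hi₀def
  obtain ⟨hi₀N, hi₀cone⟩ := Nat.find_spec hex
  have hwbne : w β ≠ 0 := R.root_ne_zero hw hβ
  have hi₀pos : 0 < i₀ := by
    rcases Nat.eq_zero_or_pos i₀ with h | h
    case inr => exact h
    · exfalso
      have h1 : vf 0 β ∈ nnCone R.simples := h ▸ hi₀cone
      rw [hv0] at h1
      exact hwbne (R.eq_zero_of_mem_nnCone_of_neg_mem h1 hneg)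
  set j := i₀ - 1 with hjdef
  have hji : j + 1 = i₀ := by omega
  have hNpos : 1 ≤ N := by omega
  have hjlt : j < l.length := by rw [hlen]; omega
  set g := l[j]'hjlt with hgdef
  have hdrop : l.drop j = g :: l.drop (j+1) := List.drop_eq_getElem_cons hjlt
  have hgmem : g ∈ R.gens := hl g (List.getElem_mem hjlt)
  obtain ⟨δ, hδ, hgr⟩ := R.gens_description hgmem
  have hvj : vf j = g * vf i₀ := by
    rw [hvf]
    simp only
    rw [hdrop, List.prod_cons, hji]
  have hvjβ : -(vf j β) ∈ nnCone R.simples := by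
    by_cases hj0 : j = 0
    · rw [hj0, hv0]; exact hneg
    · have hjlen : R.length (vf j) < N := by
        have := hvlen j
        omega
      rcases dich (vf j) (hvW j) hjlen β hβ with h | h
      · exfalso
        have := Nat.find_min hex (show j < i₀ by omega)
        exact this ⟨by omega, h⟩
      · exact h
  have hflip : ∃ t : ℝ, 0 ≤ t ∧ vf i₀ β = t • δ := by
    apply R.flip_lemma hδ hi₀cone
    have : R.refl δ (R.norm_one δ hδ) (vf i₀ β) = vf j β := by
      rw [← hgr, hvj, mul_apply']
    rw [this]
    exact hvjβ
  obtain ⟨t, ht0, hteq⟩ := hflip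
  have hnorm : R.form (vf i₀ β) (vf i₀ β) = 1 := R.root_norm_one (hvW i₀) hβ
  have ht1 : t = 1 := by
    rw [hteq] at hnorm
    simp only [map_smul, LinearMap.smul_apply, smul_eq_mul, R.norm_one δ hδ] at hnorm
    nlinarith
  have hvi₀β : vf i₀ β = δ := by rw [hteq, ht1, one_smul]
  have hconj := R.conj_refl (hvW i₀) (R.norm_one β hβ) (R.norm_one δ hδ) hvi₀β
  have hmove : vf i₀ * R.refl β (R.norm_one β hβ) = g * vf i₀ := by
    have := congrArg (fun y => y * vf i₀) hconj
    simpa [mul_assoc, hgr] using this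
  have hw_decomp : w = (l.take j).prod * vf j := by
    rw [hwl, hvf]
    simp only
    rw [← List.prod_append, List.take_append_drop]
  have hfinal : w * R.refl β (R.norm_one β hβ) = (l.take j).prod * vf i₀ := by
    have hgg : g * g = 1 := by rw [hgr]; exact R.refl_mul_self δ _
    rw [hw_decomp, hvj, mul_assoc, mul_assoc, hmove, ← mul_assoc g, hgg, one_mul]
  have hwit : R.length (w * R.refl β (R.norm_one β hβ)) ≤ j + (N - i₀) := by
    have hlist : ∀ x ∈ l.take j ++ l.drop i₀, x ∈ R.gens := by
      intro x hx
      rcases List.mem_append.1 hx with h | h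
      exacts [hl x (List.take_subset _ _ h), hl x (List.drop_subset _ _ h)]
    have h1 := R.length_le hlist
    rw [List.prod_append] at h1
    rw [hfinal]
    apply le_trans h1
    rw [List.length_append, List.length_take, List.length_drop, hlen]
    omega
  omega

/-- The key lemma: if `β` is simple and `ℓ(w) ≤ ℓ(w sᵦ)` then `w β` is positive. -/
lemma key_lemma : ∀ n : ℕ, ∀ w ∈ R.W, R.length w ≤ n → ∀ β, ∀ hβ : β ∈ R.simples,
    R.length w ≤ R.length (w * R.refl β (R.norm_one β hβ)) →
    w β ∈ nnCone R.simples := by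
  intro n
  induction n using Nat.strong_induction_on with
  | _ n IH =>
  have dich : ∀ v ∈ R.W, R.length v < n → ∀ γ, γ ∈ R.simples →
      (v γ ∈ nnCone R.simples ∨ -(v γ) ∈ nnCone R.simples) := by
    intro v hv hlv γ hγ
    set rγ := R.refl γ (R.norm_one γ hγ) with hrγ
    by_cases hle : R.length v ≤ R.length (v * rγ)
    · left
      exact IH (R.length v) hlv v hv le_rfl γ hγ hle
    · right
      push_neg at hle
      set u := v * rγ with hu
      have huW : u ∈ R.W := mul_mem hv (R.gens_mem_W (R.refl_mem_gens hγ))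
      have hurγ : u * rγ = v := by
        rw [hu, mul_assoc, R.refl_mul_self γ _, mul_one]
      have hule : R.length u ≤ R.length (u * rγ) := by
        rw [hurγ]; exact le_of_lt hle
      have hucone : u γ ∈ nnCone R.simples :=
        IH (R.length u) (by omega) u huW le_rfl γ hγ hule
      have : v γ = -(u γ) := by
        rw [← hurγ, mul_apply', hrγ, R.refl_apply_self, map_neg]
      rw [this, neg_neg]
      exact hucone
  intro w hw hlw β hβ hlen
  by_cases h0 : R.length w = 0
  · have hw1 : w = 1 := R.eq_one_of_length_eq_zero hw h0
    rw [hw1]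
    exact mem_nnCone_of_mem hβ
  -- ℓ(w) ≥ 1 : main case
  obtain ⟨l, hl, hwl, hllen⟩ := R.exists_min_word hw
  have hlne : l ≠ [] := by
    intro h
    rw [h] at hllen
    exact h0 (by simpa using hllen.symm)
  set g := l.getLast hlne with hgdef
  have hgmem : g ∈ R.gens := hl g (List.getLast_mem hlne)
  obtain ⟨τ, hτ, hgr⟩ := R.gens_description hgmem
  have hwg : w * g = l.dropLast.prod := by
    conv_lhs => rw [hwl, ← List.dropLast_append_getLast hlne]
    rw [List.prod_append, List.prod_singleton, mul_assoc, ← hgdef]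
    have hgg : g * g = 1 := by rw [hgr]; exact R.refl_mul_self τ _
    rw [hgg, mul_one]
  have hlwg : R.length (w * g) < R.length w := by
    have h1 := R.length_le (l := l.dropLast) (fun x hx => hl x (List.dropLast_subset _ hx))
    rw [← hwg] at h1
    rw [List.length_dropLast, hllen] at h1
    omega
  have hβτ : β ≠ τ := by
    intro h
    subst h
    rw [← hgr] at hlen
    omega
  set rβ := R.refl β (R.norm_one β hβ) with hrβ
  set rτ := R.refl τ (R.norm_one τ hτ) with hrτ
  set D := Subgroup.closure ({rβ, rτ} : Set (V ≃ₗ[ℝ] V)) with hD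
  have hsubW : ∀ x ∈ D, x ∈ R.W := by
    intro x hx
    have : D ≤ R.W := by
      rw [hD]
      apply (Subgroup.closure_le _).mpr
      intro y hy
      rcases hy with rfl | hy
      · exact R.gens_mem_W (R.refl_mem_gens hβ)
      · rw [Set.mem_singleton_iff] at hy
        rw [hy]
        exact R.gens_mem_W (R.refl_mem_gens hτ)
    exact this hx
  have hrβD : rβ ∈ D := Subgroup.subset_closure (Set.mem_insert _ _)
  have hrτD : rτ ∈ D := Subgroup.subset_closure (Set.mem_insert_of_mem _ rfl)
  set S : Set ℕ := {mv | ∃ x ∈ D, R.length (w * x) = mv} with hS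
  have hSne : S.Nonempty := ⟨R.length (w * rτ), rτ, hrτD, rfl⟩
  obtain ⟨x₀, hx₀D, hx₀len⟩ := Nat.sInf_mem hSne
  have hmin : ∀ x ∈ D, sInf S ≤ R.length (w * x) := fun x hx => Nat.sInf_le ⟨x, hx, rfl⟩
  set u := w * x₀ with hu
  have huW : u ∈ R.W := mul_mem hw (hsubW x₀ hx₀D)
  have hulen : R.length u < R.length w := by
    have h1 : sInf S ≤ R.length (w * rτ) := hmin rτ hrτD
    have h2 : g = rτ := hgr
    rw [← h2] at h1
    omega
  have humin : ∀ x ∈ D, R.length u ≤ R.length (u * x) := by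
    intro x hx
    rw [hu, mul_assoc, hx₀len]
    exact hmin (x₀ * x) (mul_mem hx₀D hx)
  have hucβ : u β ∈ nnCone R.simples := by
    apply IH (R.length u) (by omega) u huW le_rfl β hβ
    exact humin rβ hrβD
  have hucτ : u τ ∈ nnCone R.simples := by
    apply IH (R.length u) (by omega) u huW le_rfl τ hτ
    exact humin rτ hrτD
  obtain ⟨a, b, hxβ, hsgn⟩ := R.dihedral_sign hβ hτ hβτ x₀⁻¹ (inv_mem hx₀D)
  have huxw : u * x₀⁻¹ = w := by rw [hu, mul_inv_cancel_right]
  have hwβ : w β = a • u β + b • u τ := by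
    rw [← huxw, mul_apply', hxβ, map_add, map_smul, map_smul]
  rcases hsgn with ⟨ha, hb⟩ | ⟨ha, hb⟩
  · rw [hwβ]
    exact add_mem_nnCone (smul_mem_nnCone ha hucβ) (smul_mem_nnCone hb hucτ)
  · exfalso
    have hneg : -(w β) ∈ nnCone R.simples := by
      have heq : -(w β) = (-a) • u β + (-b) • u τ := by rw [hwβ]; module
      rw [heq]
      exact add_mem_nnCone (smul_mem_nnCone (by linarith) hucβ)
        (smul_mem_nnCone (by linarith) hucτ)
    have hd := R.descent hw hβ hneg (fun v hv hlt γ hγ => dich v hv (by omega) γ hγ)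
    rw [← hrβ] at hd
    omega

/-- Dichotomy: `w β` is a positive or negative root. -/
lemma cone_dichotomy {w : V ≃ₗ[ℝ] V} (hw : w ∈ R.W) {β : V} (hβ : β ∈ R.simples) :
    w β ∈ nnCone R.simples ∨ -(w β) ∈ nnCone R.simples := by
  set rβ := R.refl β (R.norm_one β hβ) with hrβ
  by_cases hle : R.length w ≤ R.length (w * rβ)
  · left
    exact R.key_lemma (R.length w) w hw le_rfl β hβ hle
  · right
    push_neg at hle
    set u := w * rβ with hu
    have huW : u ∈ R.W := mul_mem hw (R.gens_mem_W (R.refl_mem_gens hβ))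
    have hurβ : u * rβ = w := by rw [hu, mul_assoc, R.refl_mul_self β _, mul_one]
    have hule : R.length u ≤ R.length (u * rβ) := by rw [hurβ]; omega
    have hucone : u β ∈ nnCone R.simples :=
      R.key_lemma (R.length u) u huW le_rfl β hβ hule
    have : w β = -(u β) := by rw [← hurβ, mul_apply', hrβ, R.refl_apply_self, map_neg]
    rw [this, neg_neg]
    exact hucone

/-- A nontrivial element sends some simple root to a negative root. -/
lemma moves_simple_neg {w : V ≃ₗ[ℝ] V} (hw : w ∈ R.W) (hne : w ≠ 1) :
    ∃ τ, ∃ _ : τ ∈ R.simples, -(w τ) ∈ nnCone R.simples := by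
  obtain ⟨l, hl, hwl, hllen⟩ := R.exists_min_word hw
  have h0 : R.length w ≠ 0 := fun h => hne (R.eq_one_of_length_eq_zero hw h)
  have hlne : l ≠ [] := by
    intro h
    rw [h] at hllen
    exact h0 (by simpa using hllen.symm)
  set g := l.getLast hlne with hgdef
  have hgmem : g ∈ R.gens := hl g (List.getLast_mem hlne)
  obtain ⟨τ, hτ, hgr⟩ := R.gens_description hgmem
  refine ⟨τ, hτ, ?_⟩
  have hwg : w * g = l.dropLast.prod := by
    conv_lhs => rw [hwl, ← List.dropLast_append_getLast hlne]
    rw [List.prod_append, List.prod_singleton, mul_assoc, ← hgdef]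
    have hgg : g * g = 1 := by rw [hgr]; exact R.refl_mul_self τ _
    rw [hgg, mul_one]
  have hlwg : R.length (w * g) < R.length w := by
    have h1 := R.length_le (l := l.dropLast) (fun x hx => hl x (List.dropLast_subset _ hx))
    rw [← hwg] at h1
    rw [List.length_dropLast, hllen] at h1
    omega
  set u := w * g with hu
  have huW : u ∈ R.W := mul_mem hw (R.gens_mem_W hgmem)
  have hug : u * g = w := by
    rw [hu, mul_assoc]
    have hgg : g * g = 1 := by rw [hgr]; exact R.refl_mul_self τ _
    rw [hgg, mul_one]
  have hule : R.length u ≤ R.length (u * (R.refl τ (R.norm_one τ hτ))) := by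
    rw [← hgr, hug]; omega
  have hucone : u τ ∈ nnCone R.simples :=
    R.key_lemma (R.length u) u huW le_rfl τ hτ hule
  have : w τ = -(u τ) := by
    rw [← hug, mul_apply', hgr, R.refl_apply_self, map_neg]
  rw [this, neg_neg]
  exact hucone

end BasedRootSystem
namespace BasedRootSystem

open scoped Classical

set_option linter.unusedSectionVars false
set_option maxHeartbeats 1000000

variable {V : Type*} [AddCommGroup V] [Module ℝ V] (R : BasedRootSystem V)

lemma root_self_one {α : V} (hα : α ∈ R.roots) : R.form α α = 1 := by
  obtain ⟨w, hw, β, hβ, rfl⟩ := hα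
  exact R.root_norm_one hw hβ

/-- Part 1: a root in the fundamental chamber is positive. -/
lemma posRoot_part {α : V} (hα : α ∈ R.roots) (hc : α ∈ R.chamber) :
    α ∈ nnCone R.simples := by
  obtain ⟨w, hw, β, hβ, rfl⟩ := hα
  rcases R.cone_dichotomy hw hβ with h | h
  · exact h
  · exfalso
    set α := w β with hαdef
    obtain ⟨s, c, hs, hc0, hsum⟩ := h
    have h1 : R.form α (-α) = -1 := by
      rw [map_neg, R.root_norm_one hw hβ]
    have h2 : R.form α (-α) = ∑ x ∈ s, c x * R.form α x := by
      rw [hsum, map_sum]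
      exact Finset.sum_congr rfl fun x _ => by rw [map_smul, smul_eq_mul]
    have h3 : 0 ≤ ∑ x ∈ s, c x * R.form α x := by
      apply Finset.sum_nonneg
      intro x hx
      exact mul_nonneg (hc0 x hx) (hc x (hs hx))
    rw [h1] at h2
    linarith [h2 ▸ h3]

/-- Under irreducibility, the support of a dominant root is all of `Π`;
in particular `Π` is finite. -/
lemma support_lemma (hIrr : R.Irred) {α : V} (hα : α ∈ R.roots) (hc : α ∈ R.chamber) :
    ∃ Δ : Finset V, R.simples = ↑Δ ∧ ∃ c : V → ℝ, (∀ x ∈ Δ, 0 < c x) ∧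
      α = ∑ x ∈ Δ, c x • x := by
  obtain ⟨s, c, hs, hc0, hsum⟩ := R.posRoot_part hα hc
  set Δ := s.filter (fun x => c x ≠ 0) with hΔdef
  have hΔsub : ↑Δ ⊆ R.simples := fun x hx =>
    hs (by exact_mod_cast Finset.mem_of_mem_filter _ (by exact_mod_cast hx))
  have hΔpos : ∀ x ∈ Δ, 0 < c x := by
    intro x hx
    rcases Finset.mem_filter.1 hx with ⟨hxs, hcx⟩
    exact lt_of_le_of_ne (hc0 x hxs) (Ne.symm hcx)
  have hαΔ : α = ∑ x ∈ Δ, c x • x := by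
    rw [hsum]
    symm
    apply Finset.sum_filter_of_ne
    intro x _ hx hcx
    exact hx (by rw [hcx, zero_smul])
  refine ⟨Δ, ?_, c, hΔpos, hαΔ⟩
  -- support is everything
  have hαne : α ≠ 0 := by
    intro h
    have := R.root_self_one hα
    rw [h] at this
    simp at this
  have hΔne : (↑Δ : Set V).Nonempty := by
    by_contra h
    rw [Set.not_nonempty_iff_eq_empty] at h
    have : Δ = ∅ := by exact_mod_cast h
    rw [this] at hαΔ
    simp at hαΔ
    exact hαne hαΔ
  have horth : ∀ a ∈ (↑Δ : Set V), ∀ b ∈ R.simples \ ↑Δ, R.form a b = 0 := by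
    intro a ha b hb
    obtain ⟨hbS, hbD⟩ := hb
    have hub : 0 ≤ R.form α b := hc b hbS
    have hform : R.form α b = ∑ x ∈ Δ, c x * R.form x b := by
      rw [hαΔ]
      simp [map_sum, LinearMap.sum_apply, map_smul, LinearMap.smul_apply, smul_eq_mul]
    have hterms : ∀ x ∈ Δ, c x * R.form x b ≤ 0 := by
      intro x hx
      have hxb : x ≠ b := fun h => hbD (h ▸ (by exact_mod_cast hx))
      exact mul_nonpos_of_nonneg_of_nonpos (le_of_lt (hΔpos x hx))
        (R.simple_pairing_nonpos (hΔsub (by exact_mod_cast hx)) hbS hxb)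
    have hsumle : ∑ x ∈ Δ, c x * R.form x b ≤ 0 := Finset.sum_nonpos hterms
    have hzero : ∑ x ∈ Δ, c x * R.form x b = 0 := le_antisymm hsumle (hform ▸ hub)
    have hallzero := (Finset.sum_eq_zero_iff_of_nonpos hterms).1 hzero
    have haΔ : a ∈ Δ := by exact_mod_cast ha
    have h := hallzero a haΔ
    have hapos := hΔpos a haΔ
    rcases mul_eq_zero.1 h with h' | h'
    · linarith
    · exact h'
  rcases hIrr (↑Δ) (R.simples \ ↑Δ) (Set.union_diff_cancel hΔsub) horth with h | h
  · exact absurd h hΔne.ne_empty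
  · have : R.simples ⊆ ↑Δ := by
      intro x hx
      by_contra hxx
      have : x ∈ R.simples \ ↑Δ := ⟨hx, hxx⟩
      rw [h] at this
      exact this
    exact le_antisymm this hΔsub

end BasedRootSystem
namespace BasedRootSystem

open scoped Classical

set_option linter.unusedSectionVars false
set_option maxHeartbeats 1000000

variable {V : Type*} [AddCommGroup V] [Module ℝ V] (R : BasedRootSystem V)

lemma quad_expand (Δ : Finset V) (u : V → ℝ) :
    R.form (∑ x ∈ Δ, u x • x) (∑ x ∈ Δ, u x • x)
      = ∑ x ∈ Δ, ∑ y ∈ Δ, u x * u y * R.form x y := by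
  simp only [map_sum, map_smul, LinearMap.sum_apply, LinearMap.smul_apply, smul_eq_mul]
  apply Finset.sum_congr rfl
  intro x _
  rw [Finset.mul_sum]
  apply Finset.sum_congr rfl
  intro y _
  rw [R.form_symm y x]
  ring

/-- The quadratic form is positive definite on coefficients supported on the whole
of `Π`, given an irreducible system and a dominant root with full support. -/
lemma posdef_coeffs (hIrr : R.Irred) (Δ : Finset V) (hPi : R.simples = ↑Δ)
    (c : V → ℝ) (hcpos : ∀ x ∈ Δ, 0 < c x) {α : V} (hαΔ : α = ∑ x ∈ Δ, c x • x)
    (hch : α ∈ R.chamber) (hnorm : R.form α α = 1) (u : V → ℝ) :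
    0 ≤ R.form (∑ x ∈ Δ, u x • x) (∑ x ∈ Δ, u x • x) ∧
    (R.form (∑ x ∈ Δ, u x • x) (∑ x ∈ Δ, u x • x) = 0 → ∀ x ∈ Δ, u x = 0) := by
  have hmem : ∀ x ∈ Δ, x ∈ R.simples := fun x hx => by rw [hPi]; exact_mod_cast hx
  have hGd : ∀ x ∈ Δ, 0 ≤ R.form x α := by
    intro x hx
    rw [R.form_symm]
    exact hch x (hmem x hx)
  have hexp : ∀ x : V, R.form x α = ∑ y ∈ Δ, c y * R.form x y := by
    intro x
    rw [hαΔ, map_sum]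
    exact Finset.sum_congr rfl fun y _ => by rw [map_smul, smul_eq_mul]
  have hexp2 : ∀ x : V, R.form α x = ∑ y ∈ Δ, c y * R.form y x := by
    intro x
    rw [hαΔ]
    simp only [map_sum, map_smul, LinearMap.sum_apply, LinearMap.smul_apply, smul_eq_mul]
  have hstar : ∃ xs ∈ Δ, 0 < R.form xs α := by
    have h1 : R.form α α = ∑ x ∈ Δ, c x * R.form x α := hexp2 α
    rw [hnorm] at h1
    have h2 : ∑ x ∈ Δ, c x * R.form x α ≠ 0 := by rw [← h1]; norm_num
    obtain ⟨xs, hxs, hne⟩ := Finset.exists_ne_zero_of_sum_ne_zero h2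
    refine ⟨xs, hxs, ?_⟩
    have h3 := hGd xs hxs
    have h4 : R.form xs α ≠ 0 := fun h => hne (by rw [h, mul_zero])
    exact lt_of_le_of_ne h3 (Ne.symm h4)
  set w : V → ℝ := fun x => u x / c x with hwdef
  have hu : ∀ x ∈ Δ, u x = c x * w x := by
    intro x hx
    rw [hwdef]
    field_simp [ne_of_gt (hcpos x hx)]
  set E := R.form (∑ x ∈ Δ, u x • x) (∑ x ∈ Δ, u x • x) with hEdef
  set T1 := ∑ x ∈ Δ, ∑ y ∈ Δ, (-(R.form x y)) * (c x * c y) * (w x - w y)^2 / 2 with hT1def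
  set T2 := ∑ x ∈ Δ, R.form x α * (c x * (w x)^2) with hT2def
  have hident : E = T1 + T2 := by
    have hT2' : T2 = ∑ x ∈ Δ, ∑ y ∈ Δ, (c y * R.form x y) * (c x * (w x)^2) := by
      rw [hT2def]
      apply Finset.sum_congr rfl
      intro x _
      rw [hexp x, Finset.sum_mul]
    have hE' : E = ∑ x ∈ Δ, ∑ y ∈ Δ, u x * u y * R.form x y := R.quad_expand Δ u
    set f : V → V → ℝ := fun x y => R.form x y * (c x * c y) * ((w y)^2 - (w x)^2) / 2
      with hfdef
    have hdiff : E - T1 - T2 = ∑ x ∈ Δ, ∑ y ∈ Δ, f x y := by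
      rw [hE', hT1def, hT2']
      rw [← Finset.sum_sub_distrib, ← Finset.sum_sub_distrib]
      apply Finset.sum_congr rfl
      intro x hx
      rw [← Finset.sum_sub_distrib, ← Finset.sum_sub_distrib]
      apply Finset.sum_congr rfl
      intro y hy
      rw [hu x hx, hu y hy, hfdef]
      ring
    have hanti : ∑ x ∈ Δ, ∑ y ∈ Δ, f x y = 0 := by
      have h1 : ∑ x ∈ Δ, ∑ y ∈ Δ, f x y = ∑ y ∈ Δ, ∑ x ∈ Δ, f x y := Finset.sum_comm
      have h2 : ∑ y ∈ Δ, ∑ x ∈ Δ, f x y = - ∑ y ∈ Δ, ∑ x ∈ Δ, f y x := by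
        rw [← Finset.sum_neg_distrib]
        apply Finset.sum_congr rfl
        intro y _
        rw [← Finset.sum_neg_distrib]
        apply Finset.sum_congr rfl
        intro x _
        rw [hfdef]
        simp only
        rw [R.form_symm x y]
        ring
      have h3 : ∑ y ∈ Δ, ∑ x ∈ Δ, f y x = ∑ x ∈ Δ, ∑ y ∈ Δ, f x y := rfl
      rw [h3] at h2
      rw [h2] at h1
      linarith
    linarith [hdiff, hanti]
  have hT1nn : ∀ x ∈ Δ, ∀ y ∈ Δ, 0 ≤ (-(R.form x y)) * (c x * c y) * (w x - w y)^2 / 2 := by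
    intro x hx y hy
    by_cases hxy : x = y
    · subst hxy
      simp
    · have h1 : 0 ≤ -(R.form x y) := by
        have := R.simple_pairing_nonpos (hmem x hx) (hmem y hy) hxy
        linarith
      have h2 : 0 < c x * c y := mul_pos (hcpos x hx) (hcpos y hy)
      positivity
  have hT1nonneg : 0 ≤ T1 := by
    apply Finset.sum_nonneg
    intro x hx
    exact Finset.sum_nonneg fun y hy => hT1nn x hx y hy
  have hT2nn : ∀ x ∈ Δ, 0 ≤ R.form x α * (c x * (w x)^2) := by
    intro x hx
    have := hGd x hx
    have := (hcpos x hx).le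
    positivity
  have hT2nonneg : 0 ≤ T2 := Finset.sum_nonneg hT2nn
  constructor
  · rw [hident]
    linarith
  · intro hE0
    have hT1z : T1 = 0 := by linarith [hident, hE0, hT1nonneg, hT2nonneg]
    have hT2z : T2 = 0 := by linarith [hident, hE0, hT1nonneg, hT2nonneg]
    have hT2each := (Finset.sum_eq_zero_iff_of_nonneg hT2nn).1 hT2z
    have hT1outer := (Finset.sum_eq_zero_iff_of_nonneg
      (fun x hx => Finset.sum_nonneg fun y hy => hT1nn x hx y hy)).1 hT1z
    have hT1each : ∀ x ∈ Δ, ∀ y ∈ Δ,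
        (-(R.form x y)) * (c x * c y) * (w x - w y)^2 / 2 = 0 := by
      intro x hx y hy
      exact (Finset.sum_eq_zero_iff_of_nonneg (fun y hy => hT1nn x hx y hy)).1
        (hT1outer x hx) y hy
    -- the star vertex has w = 0
    obtain ⟨xs, hxs, hxspos⟩ := hstar
    have hwxs : w xs = 0 := by
      have h := hT2each xs hxs
      have hc := hcpos xs hxs
      have h2 : (w xs)^2 = 0 := by
        by_contra hne
        have h3 : 0 < (w xs)^2 := lt_of_le_of_ne (sq_nonneg _) (Ne.symm hne)
        have h4 := mul_pos hxspos (mul_pos hc h3)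
        linarith
      exact pow_eq_zero_iff (by norm_num) |>.1 h2
    -- connectivity argument
    have hallw : ∀ x ∈ Δ, w x = 0 := by
      set A : Set V := {x | x ∈ (↑Δ : Set V) ∧ w x = 0} with hA
      set B : Set V := {x | x ∈ (↑Δ : Set V) ∧ w x ≠ 0} with hB
      have hunion : A ∪ B = R.simples := by
        rw [hPi]
        ext x
        constructor
        · rintro (⟨h, _⟩ | ⟨h, _⟩) <;> exact h
        · intro h
          by_cases hw : w x = 0
          · exact Or.inl ⟨h, hw⟩
          · exact Or.inr ⟨h, hw⟩
      have horth : ∀ a ∈ A, ∀ b ∈ B, R.form a b = 0 := by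
        rintro a ⟨haΔ, haw⟩ b ⟨hbΔ, hbw⟩
        by_contra hne0
        have hab : a ≠ b := fun h => hbw (h ▸ haw)
        have h := hT1each a (by exact_mod_cast haΔ) b (by exact_mod_cast hbΔ)
        have h2 : (-(R.form a b)) * (c a * c b) * (w a - w b)^2 = 0 := by linarith
        have h3 : (-(R.form a b)) * (c a * c b) ≠ 0 := by
          apply mul_ne_zero
          · simpa using hne0
          · exact ne_of_gt (mul_pos (hcpos a (by exact_mod_cast haΔ))
              (hcpos b (by exact_mod_cast hbΔ)))
        have h4 : (w a - w b)^2 = 0 := by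
          rcases mul_eq_zero.1 h2 with h' | h'
          · exact absurd h' h3
          · exact h'
        have h5 : w a = w b := by
          have := pow_eq_zero_iff (n := 2) (by norm_num) |>.1 h4
          linarith
        exact hbw (h5 ▸ haw)
      rcases hIrr A B hunion horth with hAe | hBe
      · exfalso
        have : xs ∈ A := ⟨by exact_mod_cast hxs, hwxs⟩
        rw [hAe] at this
        exact this
      · intro x hx
        by_contra hwx
        have : x ∈ B := ⟨by exact_mod_cast hx, hwx⟩
        rw [hBe] at this
        exact this
    intro x hx
    rw [hu x hx, hallw x hx, mul_zero]

end BasedRootSystem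
namespace BasedRootSystem

open scoped Classical

set_option linter.unusedSectionVars false
set_option maxHeartbeats 1600000

/-- A `1`-separated subset of a compact set is finite. -/
lemma finite_of_separated {X : Type*} [MetricSpace X] {K s : Set X} (hK : IsCompact K)
    (hsub : s ⊆ K) (hsep : ∀ x ∈ s, ∀ y ∈ s, x ≠ y → 1 ≤ dist x y) : s.Finite := by
  have hcover : K ⊆ ⋃ z ∈ K, Metric.ball z (1/2) := by
    intro z hz
    exact Set.mem_biUnion hz (Metric.mem_ball_self (by norm_num))
  obtain ⟨t, htsub, htfin, hcov⟩ :=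
    hK.elim_finite_subcover_image (fun z _ => Metric.isOpen_ball) hcover
  have hsub2 : s ⊆ ⋃ z ∈ t, (s ∩ Metric.ball z (1/2)) := by
    intro x hx
    have hx2 := hcov (hsub hx)
    rw [Set.mem_iUnion₂] at hx2
    obtain ⟨z, hz, hxz⟩ := hx2
    exact Set.mem_biUnion hz ⟨hx, hxz⟩
  apply Set.Finite.subset (Set.Finite.biUnion htfin (fun z _ => ?_)) hsub2
  apply Set.Subsingleton.finite
  intro x hx y hy
  by_contra hne
  have h1 := hsep x hx.1 y hy.1 hne
  have h2 : dist x z < 1/2 := hx.2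
  have h3 : dist y z < 1/2 := hy.2
  have h4 : dist x y ≤ dist x z + dist z y := dist_triangle x z y
  rw [dist_comm z y] at h4
  linarith

variable {V : Type*} [AddCommGroup V] [Module ℝ V] (R : BasedRootSystem V)

/-- Part 2: under irreducibility, the existence of a dominant root makes `W` finite. -/
lemma W_finite (hIrr : R.Irred) {α : V} (hα : α ∈ R.roots) (hch : α ∈ R.chamber) :
    (R.W : Set (V ≃ₗ[ℝ] V)).Finite := by
  obtain ⟨Δ, hPi, c, hcpos, hαΔ⟩ := R.support_lemma hIrr hα hch
  have hnorm := R.root_self_one hα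
  have hposdef := R.posdef_coeffs hIrr Δ hPi c hcpos hαΔ hch hnorm
  set U : Submodule ℝ V := Submodule.span ℝ (↑Δ : Set V) with hUdef
  have hUsimples : Submodule.span ℝ R.simples = U := by rw [hPi]
  haveI hfd : FiniteDimensional ℝ U :=
    FiniteDimensional.span_of_finite ℝ (Δ.finite_toSet)
  have hcoeff : ∀ u : V, u ∈ U → ∃ f : V → ℝ, ∑ x ∈ Δ, f x • x = u := by
    intro u hu
    exact (Submodule.mem_span_finset.1 hu).imp fun _ h => h.2
  -- quadratic form facts on U
  have hquad_nonneg : ∀ u : V, u ∈ U → 0 ≤ R.form u u := by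
    intro u hu
    obtain ⟨f, hf⟩ := hcoeff u hu
    have := (hposdef f).1
    rwa [hf] at this
  have hquad_def : ∀ u : V, u ∈ U → R.form u u = 0 → u = 0 := by
    intro u hu h0
    obtain ⟨f, hf⟩ := hcoeff u hu
    have h1 : R.form (∑ x ∈ Δ, f x • x) (∑ x ∈ Δ, f x • x) = 0 := by rwa [hf]
    have h2 := (hposdef f).2 h1
    rw [← hf]
    exact Finset.sum_eq_zero fun x hx => by rw [h2 x hx, zero_smul]
  -- linear independence of Δ
  have hli : LinearIndependent ℝ ((↑) : Δ → V) := by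
    rw [Fintype.linearIndependent_iff]
    intro g hg i
    set u : V → ℝ := fun x => if hx : x ∈ Δ then g ⟨x, hx⟩ else 0 with hudef
    have hgu : ∀ i : Δ, u ↑i = g i := by
      intro i
      simp only [hudef]
      rw [dif_pos i.2]
    have hsum : ∑ x ∈ Δ, u x • x = 0 := by
      rw [← Finset.sum_attach Δ (fun x => u x • x)]
      rw [← hg]
      rw [Finset.univ_eq_attach]
      exact Finset.sum_congr rfl fun i _ => by rw [hgu i]
    have h1 : R.form (∑ x ∈ Δ, u x • x) (∑ x ∈ Δ, u x • x) = 0 := by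
      rw [hsum]; simp
    have h2 := (hposdef u).2 h1
    rw [← hgu i]
    exact h2 ↑i i.2
  have hfr : Module.finrank ℝ U = Δ.card := finrank_span_finset_eq_card hli
  -- the linear map to coordinates
  set T : U →ₗ[ℝ] (Δ → ℝ) :=
    LinearMap.pi (fun i => (R.form.flip (i : V)).comp U.subtype) with hTdef
  have hTapp : ∀ (u : U) (i : Δ), T u i = R.form (u : V) (i : V) :=
    fun u i => rfl
  have hTinj : Function.Injective T := by
    rw [← LinearMap.ker_eq_bot]
    rw [Submodule.eq_bot_iff]
    intro u hu
    have hu0 : ∀ x, x ∈ Δ → R.form (u : V) x = 0 := by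
      intro x hx
      have := congrFun (LinearMap.mem_ker.1 hu) ⟨x, hx⟩
      rwa [hTapp] at this
    have hself : R.form (u : V) (u : V) = 0 := by
      obtain ⟨f, hf⟩ := hcoeff ↑u u.2
      have h5 : R.form (∑ x ∈ Δ, f x • x) (u : V) = 0 := by
        simp only [map_sum, LinearMap.sum_apply, map_smul, LinearMap.smul_apply, smul_eq_mul]
        apply Finset.sum_eq_zero
        intro x hx
        rw [R.form_symm x, hu0 x hx, mul_zero]
      rwa [hf] at h5
    exact Subtype.ext (hquad_def ↑u u.2 hself)
  have hTsurj : Function.Surjective T := by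
    have h1 : Module.finrank ℝ U = Module.finrank ℝ (Δ → ℝ) := by
      rw [hfr, Module.finrank_pi, Fintype.card_coe]
    exact (LinearMap.injective_iff_surjective_of_finrank_eq_finrank h1).1 hTinj
  obtain ⟨v₀, hv₀⟩ := hTsurj (fun _ => 1)
  have hv₀x : ∀ x ∈ Δ, R.form (v₀ : V) x = 1 := by
    intro x hx
    have := congrFun hv₀ ⟨x, hx⟩
    rwa [hTapp] at this
  -- inner product structure on U
  letI core : InnerProductSpace.Core ℝ U :=
    { inner := fun a b => R.form ↑a ↑b
      conj_inner_symm := fun a b => by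
        simpa using (R.form_symm (↑b : V) ↑a)
      re_inner_nonneg := fun a => by
        simpa using hquad_nonneg ↑a a.2
      definite := fun a h => Subtype.ext (hquad_def ↑a a.2 (by simpa using h))
      add_left := fun a b c' => by
        simp [Submodule.coe_add, map_add, LinearMap.add_apply]
      smul_left := fun a b r => by
        simp [Submodule.coe_smul, map_smul, LinearMap.smul_apply, smul_eq_mul] }
  letI : NormedAddCommGroup U := core.toNormedAddCommGroup
  letI : InnerProductSpace ℝ U := InnerProductSpace.ofCore core.toCore
  haveI : ProperSpace U := FiniteDimensional.proper ℝ U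
  have hinner : ∀ a b : U, (inner ℝ a b : ℝ) = R.form (↑a : V) ↑b := fun a b => rfl
  -- W stabilizes U
  have hWU : ∀ w : V ≃ₗ[ℝ] V, w ∈ R.W → ∀ v : V, v ∈ U → w v ∈ U := by
    intro w hw v hv
    have h1 := R.w_sub_mem_span hw v
    rw [hUsimples] at h1
    have h2 := Submodule.add_mem U h1 hv
    simpa using h2
  -- the orbit map
  set F : {w : V ≃ₗ[ℝ] V // w ∈ R.W} → U :=
    fun p => ⟨p.1 ↑v₀, hWU p.1 p.2 ↑v₀ v₀.2⟩ with hFdef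
  have norm_eq_of_inner : ∀ a b : U, (inner ℝ a a : ℝ) = (inner ℝ b b : ℝ) → ‖a‖ = ‖b‖ := by
    intro a b h
    have h1 : ‖a‖^2 = ‖b‖^2 := by
      rw [← real_inner_self_eq_norm_sq, ← real_inner_self_eq_norm_sq, h]
    nlinarith [norm_nonneg a, norm_nonneg b]
  have hFnorm : ∀ p, ‖F p‖ = ‖v₀‖ := by
    intro p
    apply norm_eq_of_inner
    rw [hinner, hinner]
    exact R.w_form p.2 ↑v₀ ↑v₀
  have hsep : ∀ p q : {w : V ≃ₗ[ℝ] V // w ∈ R.W}, p ≠ q → 1 ≤ dist (F p) (F q) := by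
    intro p q hpq
    set d := p.1⁻¹ * q.1 with hd
    have hdW : d ∈ R.W := mul_mem (inv_mem p.2) q.2
    have hpd : p.1 * d = q.1 := by rw [hd, mul_inv_cancel_left]
    have hdne : d ≠ 1 := by
      intro h
      apply hpq
      apply Subtype.ext
      rw [← hpd, h, mul_one]
    obtain ⟨τ, hτS, hneg⟩ := R.moves_simple_neg hdW hdne
    have hτΔ : τ ∈ Δ := by
      have := hτS
      rw [hPi] at this
      exact_mod_cast this
    have hτU : τ ∈ U := Submodule.subset_span (by exact_mod_cast hτΔ)
    have hdτU : d τ ∈ U := hWU d hdW τ hτU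
    have hdvU : d ↑v₀ ∈ U := hWU d hdW ↑v₀ v₀.2
    set a : U := v₀ - ⟨d ↑v₀, hdvU⟩ with ha
    set b : U := ⟨d τ, hdτU⟩ with hb
    have hbnorm : ‖b‖ = 1 := by
      have h1 : (inner ℝ b b : ℝ) = 1 := by
        rw [hinner]
        show R.form (d τ) (d τ) = 1
        rw [R.w_form hdW, R.norm_one τ hτS]
      have h2 : ‖b‖^2 = 1 := by rw [← real_inner_self_eq_norm_sq, h1]
      nlinarith [norm_nonneg b]
    have hv₀dτ : R.form ↑v₀ (d τ) ≤ 0 := by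
      obtain ⟨s, e, hsub, he0, heq⟩ := hneg
      have h2 : R.form (↑v₀ : V) (-(d τ)) = ∑ y ∈ s, e y * R.form ↑v₀ y := by
        rw [heq, map_sum]
        exact Finset.sum_congr rfl fun y _ => by rw [map_smul, smul_eq_mul]
      rw [map_neg] at h2
      have h3 : 0 ≤ ∑ y ∈ s, e y * R.form (↑v₀ : V) y := by
        apply Finset.sum_nonneg
        intro y hy
        have hyΔ : y ∈ Δ := by
          have := hsub hy
          rw [hPi] at this
          exact_mod_cast this
        rw [hv₀x y hyΔ, mul_one]
        exact he0 y hy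
      linarith
    have hjoint : (inner ℝ a b : ℝ) ≤ -1 := by
      rw [hinner]
      have hcoe : ((a : U) : V) = ↑v₀ - d ↑v₀ := rfl
      rw [hcoe, map_sub, LinearMap.sub_apply]
      have h3 : R.form (d ↑v₀) (d τ) = 1 := by
        rw [R.w_form hdW, hv₀x τ hτΔ]
      show R.form (↑v₀ : V) (d τ) - R.form (d ↑v₀) (d τ) ≤ -1
      rw [h3]
      linarith
    have habs := abs_real_inner_le_norm a b
    have h1abs : 1 ≤ |(inner ℝ a b : ℝ)| := le_abs.2 (Or.inr (by linarith))
    have hanorm : 1 ≤ ‖a‖ := by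
      rw [hbnorm, mul_one] at habs
      linarith
    have hdist : dist (F p) (F q) = ‖a‖ := by
      rw [dist_eq_norm]
      apply norm_eq_of_inner
      rw [hinner, hinner]
      have hc1 : ((F p - F q : U) : V) = p.1 ↑v₀ - q.1 ↑v₀ := rfl
      have hc2 : ((a : U) : V) = ↑v₀ - d ↑v₀ := rfl
      rw [hc1, hc2]
      have h4 : p.1 (↑v₀ - d ↑v₀) = p.1 ↑v₀ - q.1 ↑v₀ := by
        rw [map_sub]
        congr 1
        rw [← hpd]
        rfl
      rw [← h4]
      exact R.w_form p.2 _ _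
    rw [hdist]
    exact hanorm
  -- finiteness
  have hFinj : Function.Injective F := by
    intro p q h
    by_contra hne
    have h2 := hsep p q hne
    rw [h, dist_self] at h2
    linarith
  have hrange_sub : Set.range F ⊆ Metric.closedBall 0 ‖v₀‖ := by
    rintro x ⟨p, rfl⟩
    rw [Metric.mem_closedBall, dist_zero_right]
    exact le_of_eq (hFnorm p)
  have hrange_fin : (Set.range F).Finite := by
    apply finite_of_separated (isCompact_closedBall 0 ‖v₀‖) hrange_sub
    rintro x ⟨p, rfl⟩ y ⟨q, rfl⟩ hxy
    exact hsep p q (fun h => hxy (by rw [h]))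
  haveI : Finite ↥(Set.range F) := hrange_fin.to_subtype
  haveI : Finite {w : V ≃ₗ[ℝ] V // w ∈ R.W} :=
    Finite.of_injective (Set.rangeFactorization F)
      (fun p q h => hFinj (congrArg Subtype.val h))
  exact Set.finite_coe_iff.mp ‹_›

end BasedRootSystem

/-- if `α ∈ Φ ∩ 𝒞` then `α` is a positive root, and if moreover
`(W,S)` is irreducible then `W` is finite. -/
theorem statement9 {V : Type*} [AddCommGroup V] [Module ℝ V]
    (R : BasedRootSystem V) (α : V)
    (hα : α ∈ R.roots) (hc : α ∈ R.chamber) :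
    α ∈ R.posRoots ∧ (R.Irred → (R.W : Set (V ≃ₗ[ℝ] V)).Finite) := by
  refine ⟨⟨hα, R.posRoot_part hα hc⟩, fun hIrr => R.W_finite hIrr hα hc⟩
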